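/- Let 0 < a < 1. Then for every real number ω, the improper integral ∫₀^∞ t^{a-1} e^{-t²/2} cos(ω t) dt is strictly positive. -/

import Mathlib

open MeasureTheory Real

section aux

open Set Complex

private lemma gauss_cos_real {c : ℝ} (hc : 0 < c) (ω : ℝ) :
    ∫ t : ℝ, Real.exp (-c * t ^ 2) * Real.cos (ω * t)
      = Real.sqrt (π / c) * Real.exp (-ω ^ 2 / (4 * c)) := by
  have h := fourierIntegral_gaussian (b := (c : ℂ)) (by simpa using hc) (ω : ℂ)
  have hint : Integrable (fun x : ℝ => cexp (I * ω * x) * cexp (-c * x ^ 2)) := by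
    have := integrable_cexp_quadratic (b := (c : ℂ)) (by simpa using hc) (I * ω) 0
    refine this.congr ?_
    filter_upwards with x
    rw [← Complex.exp_add]
    ring_nf
  have hre : (∫ x : ℝ, cexp (I * ω * x) * cexp (-c * x ^ 2)).re
      = ∫ x : ℝ, (cexp (I * ω * x) * cexp (-c * x ^ 2)).re := by
    rw [← RCLike.re_eq_complex_re, ← integral_re hint]
  have hlhs : ∀ x : ℝ, (cexp (I * ω * x) * cexp (-c * x ^ 2)).re
      = Real.exp (-c * x ^ 2) * Real.cos (ω * x) := by
    intro x
    rw [← Complex.exp_add, Complex.exp_re]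
    have h1 : (I * ω * x + (-c * x ^ 2 : ℂ)).re = -c * x ^ 2 := by
      simp [← Complex.ofReal_pow]
    have h2 : (I * ω * x + (-c * x ^ 2 : ℂ)).im = ω * x := by
      simp [← Complex.ofReal_pow]
    rw [h1, h2]
  have hrhs : (((π : ℂ) / c) ^ (1 / 2 : ℂ) * cexp (-(ω : ℂ) ^ 2 / (4 * c))).re
      = Real.sqrt (π / c) * Real.exp (-ω ^ 2 / (4 * c)) := by
    have h1 : ((π : ℂ) / c) ^ (1 / 2 : ℂ) = Complex.ofReal ((π / c) ^ ((1:ℝ) / 2)) := by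
      rw [show ((π : ℂ) / c) = ((π / c : ℝ) : ℂ) by push_cast; ring,
        show ((1 : ℂ)/2) = ((1/2 : ℝ) : ℂ) by norm_num,
        ← Complex.ofReal_cpow (by positivity)]
    have h2 : cexp (-(ω : ℂ) ^ 2 / (4 * c)) = ((Real.exp (-ω ^ 2 / (4 * c)) : ℝ) : ℂ) := by
      rw [show (-(ω : ℂ) ^ 2 / (4 * c)) = ((-ω ^ 2 / (4 * c) : ℝ) : ℂ) by push_cast; ring,
        ← Complex.ofReal_exp]
    rw [h1, h2, ← Complex.ofReal_mul, Complex.ofReal_re, Real.sqrt_eq_rpow]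
  calc ∫ t : ℝ, Real.exp (-c * t ^ 2) * Real.cos (ω * t)
      = ∫ x : ℝ, (cexp (I * ω * x) * cexp (-c * x ^ 2)).re := by
        refine integral_congr_ae ?_; filter_upwards with x; rw [hlhs]
    _ = (∫ x : ℝ, cexp (I * ω * x) * cexp (-c * x ^ 2)).re := hre.symm
    _ = _ := by rw [h, hrhs]

private lemma gauss_cos_Ioi {c : ℝ} (hc : 0 < c) (ω : ℝ) :
    ∫ t in Ioi (0:ℝ), Real.exp (-c * t ^ 2) * Real.cos (ω * t)
      = Real.sqrt (π / c) * Real.exp (-ω ^ 2 / (4 * c)) / 2 := by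
  have habs := integral_comp_abs (f := fun s => Real.exp (-c * s ^ 2) * Real.cos (ω * s))
  have heven : ∀ t : ℝ, Real.exp (-c * |t| ^ 2) * Real.cos (ω * |t|)
      = Real.exp (-c * t ^ 2) * Real.cos (ω * t) := by
    intro t
    rcases abs_choice t with h | h <;> rw [h]
    rw [show ω * -t = -(ω * t) by ring, Real.cos_neg, neg_sq]
  simp_rw [heven] at habs
  rw [gauss_cos_real hc ω] at habs
  linarith

private lemma gamma_rep {a : ℝ} (ha1 : a < 1) {t : ℝ} (ht : 0 < t) :
    ∫ x in Ioi (0:ℝ), x ^ ((1 - a) / 2 - 1) * Real.exp (-(x + 1 / 2) * t ^ 2)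
      = Real.Gamma ((1 - a) / 2) * (t ^ (a - 1) * Real.exp (-t ^ 2 / 2)) := by
  set b : ℝ := (1 - a) / 2 with hbdef
  have hb : 0 < b := by rw [hbdef]; linarith
  have h1 : ∀ x ∈ Ioi (0:ℝ), x ^ (b - 1) * Real.exp (-(x + 1 / 2) * t ^ 2)
      = (x ^ (b - 1) * Real.exp (-(t ^ 2 * x))) * Real.exp (-t ^ 2 / 2) := by
    intro x _
    rw [mul_assoc, ← Real.exp_add]
    ring_nf
  rw [setIntegral_congr_fun measurableSet_Ioi h1, integral_mul_const,
    Real.integral_rpow_mul_exp_neg_mul_Ioi hb (by positivity : (0:ℝ) < t ^ 2)]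
  have h2 : (1 / t ^ 2 : ℝ) ^ b = t ^ (a - 1) := by
    rw [one_div, ← Real.rpow_natCast t 2, ← Real.rpow_neg ht.le, ← Real.rpow_mul ht.le]
    norm_num
    rw [hbdef]
    ring_nf
  rw [h2]
  ring

/-- The kernel appearing in the double-integral representation. -/
private noncomputable def kern (b ω t x : ℝ) : ℝ :=
  x ^ (b - 1) * Real.exp (-(x + 1 / 2) * t ^ 2) * Real.cos (ω * t)

end aux

set_option maxHeartbeats 1000000 in
/-- For `0 < a < 1` and any real `ω`, the improper integral
`∫₀^∞ t^(a-1) e^(-t²/2) cos(ω t) dt` is strictly positive. -/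
theorem positive_cosine_integral (a : ℝ) (ha : 0 < a) (ha1 : a < 1) (ω : ℝ) :
    0 < ∫ t in Set.Ioi (0:ℝ), t ^ (a - 1) * Real.exp (-t ^ 2 / 2) * Real.cos (ω * t) := by
  open Set in
  have hb : 0 < (1 - a) / 2 := by linarith
  set b : ℝ := (1 - a) / 2 with hbdef
  have hΓ : 0 < Real.Gamma b := Real.Gamma_pos_of_pos hb
  have hkern : ∀ t x : ℝ, kern b ω t x
      = x ^ (b - 1) * Real.exp (-(x + 1 / 2) * t ^ 2) * Real.cos (ω * t) := fun _ _ => rfl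
  have hmeas : AEStronglyMeasurable (Function.uncurry (kern b ω))
      ((volume.restrict (Ioi (0:ℝ))).prod (volume.restrict (Ioi (0:ℝ)))) := by
    apply Measurable.aestronglyMeasurable
    have : Function.uncurry (kern b ω) = fun p : ℝ × ℝ =>
        p.2 ^ (b - 1) * Real.exp (-(p.2 + 1 / 2) * p.1 ^ 2) * Real.cos (ω * p.1) := rfl
    rw [this]
    fun_prop
  -- integrability in x for fixed t > 0
  have hinner : ∀ t : ℝ, 0 < t →
      IntegrableOn (fun x => x ^ (b - 1) * Real.exp (-(x + 1 / 2) * t ^ 2)) (Ioi (0:ℝ)) := by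
    intro t ht
    have h0 : IntegrableOn (fun x : ℝ => x ^ (b - 1) * Real.exp (-(t ^ 2) * x ^ (1:ℝ)))
        (Ioi 0) := integrableOn_rpow_mul_exp_neg_mul_rpow (by linarith) (by norm_num) (by positivity)
    refine IntegrableOn.congr_fun (h0.mul_const (Real.exp (-t ^ 2 / 2))) ?_ measurableSet_Ioi
    intro x hx
    simp only [Real.rpow_one, mul_assoc, ← Real.exp_add]
    ring_nf
  -- value of the inner integral of norms, for t > 0
  have hnorm : ∀ t : ℝ, 0 < t → ∫ x in Ioi (0:ℝ), ‖kern b ω t x‖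
      = Real.Gamma b * (t ^ (a - 1) * Real.exp (-t ^ 2 / 2)) * |Real.cos (ω * t)| := by
    intro t ht
    have heq : ∀ x ∈ Ioi (0:ℝ), ‖kern b ω t x‖
        = x ^ (b - 1) * Real.exp (-(x + 1 / 2) * t ^ 2) * |Real.cos (ω * t)| := by
      intro x hx
      rw [hkern]
      simp only [Real.norm_eq_abs, abs_mul]
      rw [abs_of_nonneg (Real.rpow_nonneg (le_of_lt hx) _), abs_of_nonneg (Real.exp_pos _).le]
    rw [setIntegral_congr_fun measurableSet_Ioi heq, integral_mul_const, gamma_rep ha1 ht]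
  -- product integrability
  have hprod : Integrable (Function.uncurry (kern b ω))
      ((volume.restrict (Ioi (0:ℝ))).prod (volume.restrict (Ioi (0:ℝ)))) := by
    rw [integrable_prod_iff hmeas]
    constructor
    · filter_upwards [ae_restrict_mem measurableSet_Ioi] with t ht
      simp only [Function.uncurry, kern]
      exact ((hinner t ht).mul_const _)
    · have hdom : IntegrableOn
          (fun t : ℝ => Real.Gamma b * (t ^ (a - 1) * Real.exp (-(1/2) * t ^ 2)))
          (Ioi (0:ℝ)) :=
        (integrableOn_rpow_mul_exp_neg_mul_sq (by norm_num) (by linarith)).const_mul _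
      refine hdom.mono' (hmeas.norm.integral_prod_right') ?_
      filter_upwards [ae_restrict_mem measurableSet_Ioi] with t ht
      simp only [Function.uncurry_apply_pair]
      have h1 : (0:ℝ) ≤ ∫ x in Ioi (0:ℝ), ‖kern b ω t x‖ :=
        integral_nonneg fun x => norm_nonneg _
      rw [Real.norm_eq_abs, abs_of_nonneg h1, hnorm t ht]
      have h2 : |Real.cos (ω * t)| ≤ 1 := abs_cos_le_one _
      have h3 : 0 ≤ Real.Gamma b * (t ^ (a - 1) * Real.exp (-t ^ 2 / 2)) := by
        have := Real.rpow_nonneg (le_of_lt (mem_Ioi.mp ht)) (a - 1)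
        positivity
      calc Real.Gamma b * (t ^ (a - 1) * Real.exp (-t ^ 2 / 2)) * |Real.cos (ω * t)|
          ≤ Real.Gamma b * (t ^ (a - 1) * Real.exp (-t ^ 2 / 2)) * 1 :=
            mul_le_mul_of_nonneg_left h2 h3
        _ = Real.Gamma b * (t ^ (a - 1) * Real.exp (-(1/2) * t ^ 2)) := by ring_nf
  -- Fubini
  have hswap : ∫ t in Ioi (0:ℝ), ∫ x in Ioi (0:ℝ), kern b ω t x
      = ∫ x in Ioi (0:ℝ), ∫ t in Ioi (0:ℝ), kern b ω t x :=
    integral_integral_swap hprod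
  -- the left-hand side equals `Γ b` times the target integral
  have hL : ∫ t in Ioi (0:ℝ), ∫ x in Ioi (0:ℝ), kern b ω t x
      = Real.Gamma b * ∫ t in Ioi (0:ℝ),
          t ^ (a - 1) * Real.exp (-t ^ 2 / 2) * Real.cos (ω * t) := by
    rw [← integral_const_mul]
    refine setIntegral_congr_fun measurableSet_Ioi fun t ht => ?_
    have hx : ∫ x in Ioi (0:ℝ), kern b ω t x
        = (∫ x in Ioi (0:ℝ), x ^ (b - 1) * Real.exp (-(x + 1 / 2) * t ^ 2))
            * Real.cos (ω * t) := by
      rw [← integral_mul_const]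
      exact setIntegral_congr_fun measurableSet_Ioi fun x _ => hkern t x
    rw [hx, gamma_rep ha1 ht]
    ring
  -- the right-hand side is positive
  have hRpos : 0 < ∫ x in Ioi (0:ℝ), ∫ t in Ioi (0:ℝ), kern b ω t x := by
    set F : ℝ → ℝ := fun x => ∫ t in Ioi (0:ℝ), kern b ω t x with hFdef
    have hFval : ∀ x ∈ Ioi (0:ℝ), F x = x ^ (b - 1) *
        (Real.sqrt (π / (x + 1/2)) * Real.exp (-ω ^ 2 / (4 * (x + 1/2))) / 2) := by
      intro x hx
      have hc : 0 < x + 1/2 := by have := mem_Ioi.mp hx; linarith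
      have h1 : ∫ t in Ioi (0:ℝ), kern b ω t x = x ^ (b - 1) *
          ∫ t in Ioi (0:ℝ), Real.exp (-(x + 1/2) * t ^ 2) * Real.cos (ω * t) := by
        rw [← integral_const_mul]
        refine setIntegral_congr_fun measurableSet_Ioi fun t ht => ?_
        rw [hkern]; ring
      calc F x = ∫ t in Ioi (0:ℝ), kern b ω t x := rfl
        _ = _ := by rw [h1, gauss_cos_Ioi hc ω]
    have hFpos : ∀ x ∈ Ioi (0:ℝ), 0 < F x := by
      intro x hx
      rw [hFval x hx]
      have hx0 : (0:ℝ) < x := mem_Ioi.mp hx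
      have hc : 0 < x + 1/2 := by linarith
      have h1 : 0 < x ^ (b - 1) := Real.rpow_pos_of_pos hx0 _
      have h2 : 0 < π / (x + 1/2) := div_pos Real.pi_pos hc
      positivity
    have hFint : IntegrableOn F (Ioi (0:ℝ)) := by
      have h0 := hprod.integral_prod_right
      refine h0.congr ?_
      filter_upwards with x
      simp only [Function.uncurry_apply_pair]
      rfl
    rw [setIntegral_pos_iff_support_of_nonneg_ae]
    · refine lt_of_lt_of_le ?_
        (measure_mono (fun x hx => Set.mem_inter (ne_of_gt (hFpos x hx)) hx))
      simp [Real.volume_Ioi]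
    · filter_upwards [ae_restrict_mem measurableSet_Ioi] with x hx
      exact (hFpos x hx).le
    · exact hFint
  rw [hL] at hswap
  nlinarith [hΓ, hswap, hRpos]
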